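/- Let ψ₁, ψ₂ be unit vectors in a complex inner product space with real inner product ⟨ψ₁,ψ₂⟩ = cos θ ∈ (0,1). Then the four vectors e₁ = (ψ₁⊗ψ₁ + ψ₂⊗ψ₂)/(√2·n₊), e₂ = (ψ₁⊗ψ₁ − ψ₂⊗ψ₂)/(√2·n₋), e₃ = (ψ̄₁⊗ψ̄₂ + ψ̄₂⊗ψ̄₁)/(√2·n₊), e₄ = (ψ̄₁⊗ψ̄₂ − ψ̄₂⊗ψ̄₁)/(√2·n₋), where n± = √(1 ± cos²θ), form an orthonormal system. -/

import Mathlib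

/-- The elementary tensor `v ⊗ w` of two vectors of `ℂ^n`, realized in
`ℂ^(n × n)` (with the standard inner ℂ product, this realizes `H ⊗ H`). -/
noncomputable def kron {n : ℕ} (v w : EuclideanSpace ℂ (Fin n)) :
    EuclideanSpace ℂ (Fin n × Fin n) :=
  (WithLp.equiv 2 _).symm fun p => v p.1 * w p.2

lemma inner_kron {n : ℕ} (v w v' w' : EuclideanSpace ℂ (Fin n)) :
    (inner ℂ (kron v w) (kron v' w') : ℂ) = inner ℂ v v' * inner ℂ w w' := by
  simp only [kron, PiLp.inner_apply, RCLike.inner_apply, WithLp.equiv_symm_apply, PiLp.toLp_apply,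
    map_mul, Fintype.sum_prod_type, Finset.sum_mul, Finset.mul_sum]
  rw [Finset.sum_comm]
  congr 1; ext i; congr 1; ext j; ring

set_option maxHeartbeats 1000000 in
/-- With `ψ₁, ψ₂` unit vectors with real overlap `cos θ = c ∈ (0,1)`, and `ψ̄₁, ψ̄₂`
unit vectors in their span orthogonal to `ψ₁` resp. `ψ₂` with `⟨ψ̄₁,ψ̄₂⟩ = c`, the
four vectors `e₁, e₂, e₃, e₄` form an orthonormal system in `H ⊗ H`. -/
theorem orthonormal_basis_of_comparison {n : ℕ}
    (ψ₁ ψ₂ ψb₁ ψb₂ : EuclideanSpace ℂ (Fin n)) (c : ℝ)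
    (hc0 : 0 < c) (hc1 : c < 1)
    (h₁ : ‖ψ₁‖ = 1) (h₂ : ‖ψ₂‖ = 1) (hb₁ : ‖ψb₁‖ = 1) (hb₂ : ‖ψb₂‖ = 1)
    (hol : (inner ℂ ψ₁ ψ₂ : ℂ) = (c : ℂ))
    (hspan₁ : ψb₁ ∈ Submodule.span ℂ {ψ₁, ψ₂})
    (hspan₂ : ψb₂ ∈ Submodule.span ℂ {ψ₁, ψ₂})
    (hperp₁ : (inner ℂ ψb₁ ψ₁ : ℂ) = 0) (hperp₂ : (inner ℂ ψb₂ ψ₂ : ℂ) = 0)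
    (holb : (inner ℂ ψb₁ ψb₂ : ℂ) = (c : ℂ))
    (hreal₁ : ∃ r : ℝ, (inner ℂ ψ₁ ψb₂ : ℂ) = (r : ℂ))
    (hreal₂ : ∃ r : ℝ, (inner ℂ ψ₂ ψb₁ : ℂ) = (r : ℂ)) :
    Orthonormal ℂ
      ![((Real.sqrt 2 * Real.sqrt (1 + c ^ 2) : ℝ) : ℂ)⁻¹ •
          (kron ψ₁ ψ₁ + kron ψ₂ ψ₂),
        ((Real.sqrt 2 * Real.sqrt (1 - c ^ 2) : ℝ) : ℂ)⁻¹ •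
          (kron ψ₁ ψ₁ - kron ψ₂ ψ₂),
        ((Real.sqrt 2 * Real.sqrt (1 + c ^ 2) : ℝ) : ℂ)⁻¹ •
          (kron ψb₁ ψb₂ + kron ψb₂ ψb₁),
        ((Real.sqrt 2 * Real.sqrt (1 - c ^ 2) : ℝ) : ℂ)⁻¹ •
          (kron ψb₁ ψb₂ - kron ψb₂ ψb₁)] := by
  have h11 : (inner ℂ ψ₁ ψ₁ : ℂ) = 1 := by
    rw [inner_self_eq_norm_sq_to_K, h₁]; norm_num
  have h22 : (inner ℂ ψ₂ ψ₂ : ℂ) = 1 := by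
    rw [inner_self_eq_norm_sq_to_K, h₂]; norm_num
  have hb11 : (inner ℂ ψb₁ ψb₁ : ℂ) = 1 := by
    rw [inner_self_eq_norm_sq_to_K, hb₁]; norm_num
  have hb22 : (inner ℂ ψb₂ ψb₂ : ℂ) = 1 := by
    rw [inner_self_eq_norm_sq_to_K, hb₂]; norm_num
  have h21 : (inner ℂ ψ₂ ψ₁ : ℂ) = (c : ℂ) := by
    rw [← inner_conj_symm, hol, Complex.conj_ofReal]
  have holb' : (inner ℂ ψb₂ ψb₁ : ℂ) = (c : ℂ) := by
    rw [← inner_conj_symm, holb, Complex.conj_ofReal]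
  have hperp₁' : (inner ℂ ψ₁ ψb₁ : ℂ) = 0 := by
    rw [← inner_conj_symm, hperp₁, map_zero]
  have hperp₂' : (inner ℂ ψ₂ ψb₂ : ℂ) = 0 := by
    rw [← inner_conj_symm, hperp₂, map_zero]
  have hp : (0:ℝ) < 1 + c ^ 2 := by nlinarith
  have hm : (0:ℝ) < 1 - c ^ 2 := by nlinarith
  have ha : ((Real.sqrt 2 : ℝ):ℂ) ≠ 0 := by
    exact_mod_cast Real.sqrt_ne_zero'.mpr (by norm_num)
  have hbp : ((Real.sqrt (1 + c ^ 2) : ℝ):ℂ) ≠ 0 := by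
    exact_mod_cast Real.sqrt_ne_zero'.mpr hp
  have hbm : ((Real.sqrt (1 - c ^ 2) : ℝ):ℂ) ≠ 0 := by
    exact_mod_cast Real.sqrt_ne_zero'.mpr hm
  have h2 : ((Real.sqrt 2 : ℝ):ℂ)^2 = 2 := by
    rw [← Complex.ofReal_pow, Real.sq_sqrt (by norm_num : (0:ℝ) ≤ 2)]; norm_num
  have hp2 : ((Real.sqrt (1 + c ^ 2) : ℝ):ℂ)^2 = 1 + (c:ℂ)^2 := by
    rw [← Complex.ofReal_pow, Real.sq_sqrt hp.le]; push_cast; ring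
  have hm2 : ((Real.sqrt (1 - c ^ 2) : ℝ):ℂ)^2 = 1 - (c:ℂ)^2 := by
    rw [← Complex.ofReal_pow, Real.sq_sqrt hm.le]; push_cast; ring
  set e₁ := ((Real.sqrt 2 * Real.sqrt (1 + c ^ 2) : ℝ) : ℂ)⁻¹ •
      (kron ψ₁ ψ₁ + kron ψ₂ ψ₂) with he₁
  set e₂ := ((Real.sqrt 2 * Real.sqrt (1 - c ^ 2) : ℝ) : ℂ)⁻¹ •
      (kron ψ₁ ψ₁ - kron ψ₂ ψ₂) with he₂
  set e₃ := ((Real.sqrt 2 * Real.sqrt (1 + c ^ 2) : ℝ) : ℂ)⁻¹ •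
      (kron ψb₁ ψb₂ + kron ψb₂ ψb₁) with he₃
  set e₄ := ((Real.sqrt 2 * Real.sqrt (1 - c ^ 2) : ℝ) : ℂ)⁻¹ •
      (kron ψb₁ ψb₂ - kron ψb₂ ψb₁) with he₄
  have expand : ∀ x y : EuclideanSpace ℂ (Fin n × Fin n), ∀ s t : ℝ,
      (inner ℂ ((s:ℂ)⁻¹ • x) ((t:ℂ)⁻¹ • y) : ℂ) = (s:ℂ)⁻¹ * (t:ℂ)⁻¹ * inner ℂ x y := by
    intro x y s t
    rw [inner_smul_left, inner_smul_right, map_inv₀, Complex.conj_ofReal]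
    ring
  have n1 : (inner ℂ e₁ e₁ : ℂ) = 1 := by
    rw [he₁, expand]
    simp only [inner_add_left, inner_add_right, inner_kron, h11, h22, hol, h21]
    push_cast
    field_simp
    linear_combination (-(((Real.sqrt (1 + c ^ 2) : ℝ):ℂ)^2)) * h2 + (-2 : ℂ) * hp2
  have n2 : (inner ℂ e₂ e₂ : ℂ) = 1 := by
    rw [he₂, expand]
    simp only [inner_sub_left, inner_sub_right, inner_kron, h11, h22, hol, h21]
    push_cast
    field_simp
    linear_combination (-(((Real.sqrt (1 - c ^ 2) : ℝ):ℂ)^2)) * h2 + (-2 : ℂ) * hm2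
  have n3 : (inner ℂ e₃ e₃ : ℂ) = 1 := by
    rw [he₃, expand]
    simp only [inner_add_left, inner_add_right, inner_kron, hb11, hb22, holb, holb']
    push_cast
    field_simp
    linear_combination (-(((Real.sqrt (1 + c ^ 2) : ℝ):ℂ)^2)) * h2 + (-2 : ℂ) * hp2
  have n4 : (inner ℂ e₄ e₄ : ℂ) = 1 := by
    rw [he₄, expand]
    simp only [inner_sub_left, inner_sub_right, inner_kron, hb11, hb22, holb, holb']
    push_cast
    field_simp
    linear_combination (-(((Real.sqrt (1 - c ^ 2) : ℝ):ℂ)^2)) * h2 + (-2 : ℂ) * hm2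
  have z12 : (inner ℂ e₁ e₂ : ℂ) = 0 := by
    rw [he₁, he₂, expand]
    simp only [inner_add_left, inner_sub_right, inner_kron, h11, h22, hol, h21]
    ring
  have z13 : (inner ℂ e₁ e₃ : ℂ) = 0 := by
    rw [he₁, he₃, expand]
    simp only [inner_add_left, inner_add_right, inner_kron, hperp₁', hperp₂']
    ring
  have z14 : (inner ℂ e₁ e₄ : ℂ) = 0 := by
    rw [he₁, he₄, expand]
    simp only [inner_add_left, inner_sub_right, inner_kron, hperp₁', hperp₂']
    ring
  have z23 : (inner ℂ e₂ e₃ : ℂ) = 0 := by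
    rw [he₂, he₃, expand]
    simp only [inner_sub_left, inner_add_right, inner_kron, hperp₁', hperp₂']
    ring
  have z24 : (inner ℂ e₂ e₄ : ℂ) = 0 := by
    rw [he₂, he₄, expand]
    simp only [inner_sub_left, inner_sub_right, inner_kron, hperp₁', hperp₂']
    ring
  have z34 : (inner ℂ e₃ e₄ : ℂ) = 0 := by
    rw [he₃, he₄, expand]
    simp only [inner_add_left, inner_sub_right, inner_kron, hb11, hb22, holb, holb']
    ring
  have sym : ∀ x y : EuclideanSpace ℂ (Fin n × Fin n),
      (inner ℂ x y : ℂ) = 0 → (inner ℂ y x : ℂ) = 0 := by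
    intro x y h
    rw [← inner_conj_symm, h, map_zero]
  have z21 := sym _ _ z12
  have z31 := sym _ _ z13
  have z41 := sym _ _ z14
  have z32 := sym _ _ z23
  have z42 := sym _ _ z24
  have z43 := sym _ _ z34
  rw [orthonormal_iff_ite]
  intro i j
  fin_cases i <;> fin_cases j <;>
    simp only [Matrix.cons_val_zero, Matrix.cons_val_one, Matrix.head_cons,
      Matrix.cons_val_two, Matrix.cons_val_three, Matrix.tail_cons, Fin.mk_zero,
      Fin.mk_one, Fin.isValue, Fin.zero_eta, Fin.reduceEq, if_true, if_false,
      reduceIte] <;>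
    first
    | exact n1 | exact n2 | exact n3 | exact n4
    | exact z12 | exact z13 | exact z14 | exact z21 | exact z23 | exact z24
    | exact z31 | exact z32 | exact z34 | exact z41 | exact z42 | exact z43
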